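/- Let ω > 0 and x_k ∈ ℝ³. The function f̂(x) = (1 + |x − x_k|)/ω² − 2·(1 − cos(ω·|x − x_k|))/(ω⁴·|x − x_k|) satisfies Δf̂(x) + ω²·f̂(x) = 1 + |x − x_k| for every x ∈ ℝ³ with x ≠ x_k. -/

import Mathlib

noncomputable def H1 (ω r : ℝ) : ℝ :=
  1/(2*ω^2*r) - Real.sin (ω*r)/(ω^3*r^2) + (1 - Real.cos (ω*r))/(ω^4*r^3)

noncomputable def H2 (ω r : ℝ) : ℝ :=
  -1/(4*ω^2*r^3) - Real.cos (ω*r)/(2*ω^2*r^3) + 3*Real.sin (ω*r)/(2*ω^3*r^4)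
    - 3*(1 - Real.cos (ω*r))/(2*ω^4*r^5)

lemma hasDerivAt_G (ω : ℝ) (hω : 0 < ω) {s : ℝ} (hs : 0 < s) :
    HasDerivAt (fun t => (1 + Real.sqrt t)/ω^2 - 2*(1 - Real.cos (ω*Real.sqrt t))/(ω^4*Real.sqrt t))
      (H1 ω (Real.sqrt s)) s := by
  have hr : 0 < Real.sqrt s := Real.sqrt_pos.2 hs
  have hsq : HasDerivAt Real.sqrt (1/(2*Real.sqrt s)) s := Real.hasDerivAt_sqrt hs.ne'
  have hcos : HasDerivAt (fun t => Real.cos (ω*Real.sqrt t))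
      (-Real.sin (ω*Real.sqrt s) * (ω * (1/(2*Real.sqrt s)))) s :=
    (Real.hasDerivAt_cos _).comp s (hsq.const_mul ω)
  have h1 : HasDerivAt (fun t => (1 + Real.sqrt t)/ω^2) ((0 + 1/(2*Real.sqrt s))/ω^2) s :=
    ((hasDerivAt_const s (1:ℝ)).add hsq).div_const _
  have h2 := (((hasDerivAt_const s (1:ℝ)).sub hcos).const_mul 2).div
    (hsq.const_mul (ω^4)) (by positivity)
  have h := h1.sub h2
  refine h.congr_deriv ?_
  symm
  simp only [Pi.sub_apply, Pi.pow_apply]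
  have hω' : ω ≠ 0 := hω.ne'
  have hr' : Real.sqrt s ≠ 0 := hr.ne'
  generalize Real.sqrt s = r at hr' ⊢
  unfold H1
  push_cast
  field_simp
  ring

lemma hasDerivAt_H1 (ω : ℝ) (hω : 0 < ω) {s : ℝ} (hs : 0 < s) :
    HasDerivAt (fun t => H1 ω (Real.sqrt t)) (H2 ω (Real.sqrt s)) s := by
  have hr : 0 < Real.sqrt s := Real.sqrt_pos.2 hs
  have hsq : HasDerivAt Real.sqrt (1/(2*Real.sqrt s)) s := Real.hasDerivAt_sqrt hs.ne'
  have hcos : HasDerivAt (fun t => Real.cos (ω*Real.sqrt t))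
      (-Real.sin (ω*Real.sqrt s) * (ω * (1/(2*Real.sqrt s)))) s :=
    (Real.hasDerivAt_cos _).comp s (hsq.const_mul ω)
  have hsin : HasDerivAt (fun t => Real.sin (ω*Real.sqrt t))
      (Real.cos (ω*Real.sqrt s) * (ω * (1/(2*Real.sqrt s)))) s :=
    (Real.hasDerivAt_sin _).comp s (hsq.const_mul ω)
  have t1 := (hasDerivAt_const s (1:ℝ)).div (hsq.const_mul (2*ω^2)) (by positivity)
  have t2 := hsin.div ((hsq.pow 2).const_mul (ω^3)) (by simp only [Pi.pow_apply]; exact mul_ne_zero (by positivity) (pow_ne_zero _ hr.ne'))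
  have t3 := ((hasDerivAt_const s (1:ℝ)).sub hcos).div ((hsq.pow 3).const_mul (ω^4)) (by simp only [Pi.pow_apply]; exact mul_ne_zero (by positivity) (pow_ne_zero _ hr.ne'))
  have h := (t1.sub t2).add t3
  refine h.congr_deriv ?_
  symm
  simp only [Pi.sub_apply, Pi.pow_apply]
  have hω' : ω ≠ 0 := hω.ne'
  have hr' : Real.sqrt s ≠ 0 := hr.ne'
  generalize Real.sqrt s = r at hr' ⊢
  unfold H2
  push_cast
  field_simp
  ring



/-- The Laplacian of a function on ℝ³: the sum, over the standard orthonormal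
basis, of the second directional derivatives. -/
noncomputable def laplacian {F : Type*} [NormedAddCommGroup F] [NormedSpace ℝ F]
    (f : EuclideanSpace ℝ (Fin 3) → F) (x : EuclideanSpace ℝ (Fin 3)) : F :=
  ∑ i : Fin 3, iteratedFDeriv ℝ 2 f x
    ![EuclideanSpace.single i (1:ℝ), EuclideanSpace.single i (1:ℝ)]

set_option maxHeartbeats 1000000 in
/-- For `ω > 0` and `x_k ∈ ℝ³`, the particular solution
`f̂(x) = (1 + |x−x_k|)/ω² − 2(1 − cos(ω|x−x_k|))/(ω⁴|x−x_k|)` satisfies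
`Δf̂ + ω² f̂ = 1 + |x − x_k|` away from `x_k`. -/
theorem particular_radial_solution_helmholtz (ω : ℝ) (hω : 0 < ω)
    (xk : EuclideanSpace ℝ (Fin 3)) (x : EuclideanSpace ℝ (Fin 3)) (hx : x ≠ xk) :
    laplacian (fun y : EuclideanSpace ℝ (Fin 3) =>
        (1 + ‖y - xk‖) / ω^2 - 2 * (1 - Real.cos (ω * ‖y - xk‖)) / (ω^4 * ‖y - xk‖)) x
      + ω^2 * ((1 + ‖x - xk‖) / ω^2
          - 2 * (1 - Real.cos (ω * ‖x - xk‖)) / (ω^4 * ‖x - xk‖))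
      = 1 + ‖x - xk‖ := by
  classical
  obtain ⟨B, hBapp⟩ : ∃ B : EuclideanSpace ℝ (Fin 3) →L[ℝ] EuclideanSpace ℝ (Fin 3) →L[ℝ] ℝ,
      ∀ v : EuclideanSpace ℝ (Fin 3), B v = innerSL ℝ v :=
    ⟨(innerSL ℝ : EuclideanSpace ℝ (Fin 3) →L[ℝ] EuclideanSpace ℝ (Fin 3) →L[ℝ] ℝ),
      fun _ => rfl⟩
  set Q : EuclideanSpace ℝ (Fin 3) → ℝ := fun y => inner ℝ (y - xk) (y - xk) with hQdef
  have hQ : ∀ y : EuclideanSpace ℝ (Fin 3),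
      HasFDerivAt Q ((2:ℝ) • (B (y - xk))) y := by
    intro y
    have hid : HasFDerivAt (fun z : EuclideanSpace ℝ (Fin 3) => z - xk)
        (ContinuousLinearMap.id ℝ _) y := (hasFDerivAt_id y).sub_const xk
    exact (hid.inner ℝ hid).congr_fderiv (by
      ext v
      rw [ContinuousLinearMap.smul_apply, hBapp]
      simp only [ContinuousLinearMap.comp_apply, ContinuousLinearMap.prod_apply,
        ContinuousLinearMap.id_apply, fderivInnerCLM_apply, ContinuousLinearMap.smul_apply,
        innerSL_apply_apply, two_smul, smul_eq_mul]
      simp [ContinuousLinearMap.add_apply, real_inner_comm, sub_mul,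
        Finset.sum_sub_distrib, mul_sub, mul_comm]
      ring)
  have hQnorm : ∀ y, Q y = ‖y - xk‖^2 := fun y => real_inner_self_eq_norm_sq _
  have hQpos : ∀ y, y ≠ xk → 0 < Q y := by
    intro y hy
    rw [hQnorm]
    exact pow_pos (norm_pos_iff.mpr (sub_ne_zero.2 hy)) 2
  have hsqrtQ : ∀ y, Real.sqrt (Q y) = ‖y - xk‖ := by
    intro y; rw [hQnorm, Real.sqrt_sq (norm_nonneg _)]
  -- the function, rewritten through Q
  have hfun : (fun y : EuclideanSpace ℝ (Fin 3) =>
        (1 + ‖y - xk‖) / ω^2 - 2 * (1 - Real.cos (ω * ‖y - xk‖)) / (ω^4 * ‖y - xk‖))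
      = fun y => (1 + Real.sqrt (Q y))/ω^2
          - 2*(1 - Real.cos (ω*Real.sqrt (Q y)))/(ω^4*Real.sqrt (Q y)) := by
    funext y; rw [hsqrtQ]
  set L : EuclideanSpace ℝ (Fin 3) → (EuclideanSpace ℝ (Fin 3) →L[ℝ] ℝ) :=
    fun y => H1 ω (Real.sqrt (Q y)) • ((2:ℝ) • (B (y - xk))) with hLdef
  have hfd : ∀ y, y ≠ xk → HasFDerivAt (fun y : EuclideanSpace ℝ (Fin 3) =>
        (1 + ‖y - xk‖) / ω^2 - 2 * (1 - Real.cos (ω * ‖y - xk‖)) / (ω^4 * ‖y - xk‖)) (L y) y := by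
    intro y hy
    rw [hfun]
    exact (hasDerivAt_G ω hω (hQpos y hy)).comp_hasFDerivAt y (hQ y)
  -- derivative of L at x
  have hinner : HasFDerivAt (fun y : EuclideanSpace ℝ (Fin 3) => B (y - xk))
      B x := by
    have h := B.hasFDerivAt.comp x
      ((hasFDerivAt_id x).sub_const xk)
    exact h.congr_fderiv (ContinuousLinearMap.comp_id _)
  have hc : HasFDerivAt (fun y => H1 ω (Real.sqrt (Q y)))
      (H2 ω (Real.sqrt (Q x)) • ((2:ℝ) • (B (x - xk)))) x :=
    (hasDerivAt_H1 ω hω (hQpos x hx)).comp_hasFDerivAt x (hQ x)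
  have hgg : HasFDerivAt (fun y : EuclideanSpace ℝ (Fin 3) => (2:ℝ) • (B (y - xk)))
      ((2:ℝ) • B) x :=
    hinner.const_smul (2:ℝ)
  have hL : HasFDerivAt L
      (H1 ω (Real.sqrt (Q x)) • ((2:ℝ) • B)
        + (H2 ω (Real.sqrt (Q x)) • ((2:ℝ) • (B (x - xk)))).smulRight
            ((2:ℝ) • (B (x - xk)))) x := hc.smul hgg
  have hev : fderiv ℝ (fun y : EuclideanSpace ℝ (Fin 3) =>
        (1 + ‖y - xk‖) / ω^2 - 2 * (1 - Real.cos (ω * ‖y - xk‖)) / (ω^4 * ‖y - xk‖))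
      =ᶠ[nhds x] L := by
    filter_upwards [isOpen_ne.mem_nhds hx] with y hy
    exact (hfd y hy).fderiv
  have h2d : fderiv ℝ (fderiv ℝ (fun y : EuclideanSpace ℝ (Fin 3) =>
        (1 + ‖y - xk‖) / ω^2 - 2 * (1 - Real.cos (ω * ‖y - xk‖)) / (ω^4 * ‖y - xk‖))) x
      = H1 ω (Real.sqrt (Q x)) • ((2:ℝ) • B)
        + (H2 ω (Real.sqrt (Q x)) • ((2:ℝ) • (B (x - xk)))).smulRight
            ((2:ℝ) • (B (x - xk))) := by
    rw [hev.fderiv_eq]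
    exact hL.fderiv
  set r := ‖x - xk‖ with hrdef
  have hr : 0 < r := norm_pos_iff.mpr (sub_ne_zero.2 hx)
  have key : ∀ i : Fin 3, iteratedFDeriv ℝ 2 (fun y : EuclideanSpace ℝ (Fin 3) =>
        (1 + ‖y - xk‖) / ω^2 - 2 * (1 - Real.cos (ω * ‖y - xk‖)) / (ω^4 * ‖y - xk‖)) x
        ![EuclideanSpace.single i (1:ℝ), EuclideanSpace.single i (1:ℝ)]
      = 2 * H1 ω r + 4 * H2 ω r * ((x i - xk i) * (x i - xk i)) := by
    intro i
    rw [iteratedFDeriv_two_apply]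
    simp only [Matrix.cons_val_zero, Matrix.cons_val_one, Matrix.head_cons]
    rw [h2d, hsqrtQ]
    simp only [ContinuousLinearMap.add_apply, ContinuousLinearMap.smul_apply,
      ContinuousLinearMap.smulRight_apply, hBapp, innerSL_apply_apply, smul_eq_mul]
    simp [EuclideanSpace.inner_single_right, EuclideanSpace.single_apply, PiLp.sub_apply,
      conj_trivial]
    ring
  unfold laplacian
  rw [Finset.sum_congr rfl (fun i _ => key i)]
  have hsum : ∑ i : Fin 3, (2 * H1 ω r + 4 * H2 ω r * ((x i - xk i) * (x i - xk i)))
      = 6 * H1 ω r + 4 * H2 ω r * r^2 := by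
    have h3 : ∑ i : Fin 3, ((x i - xk i) * (x i - xk i)) = r^2 := by
      rw [← hQnorm, hQdef]
      simp only [PiLp.inner_apply, RCLike.inner_apply, PiLp.sub_apply, conj_trivial]
    have h4 := Finset.mul_sum (Finset.univ : Finset (Fin 3))
      (fun i => (x i - xk i) * (x i - xk i)) (4 * H2 ω r)
    rw [Finset.sum_add_distrib, ← h4, h3, Finset.sum_const]
    simp
    ring
  rw [hsum]
  have hω' : ω ≠ 0 := hω.ne'
  have hr' : r ≠ 0 := hr.ne'
  unfold H1 H2
  field_simp
  ring
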